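/- arXiv:2605.15987 — 2 statements merged into one kernel-verified Lean document; each statement's English description precedes it below -/
import Mathlib

section
/- Isoperimetric-type bound for the symplectic area of closed rectifiable curves: let γ : [a,b] → ℝ^(2n) be a continuous closed curve (γ(a) = γ(b)) of finite length, i.e., with finite total variation ℓ(γ). Then the symplectic area S(γ) exists and |S(γ)| ≤ ℓ(γ)². -/
open MeasureTheory Set Filter Topology
open scoped ENNReal

noncomputable section

/-- Euclidean space `ℝ^(2n)`. -/
abbrev E (n : ℕ) : Type := EuclideanSpace ℝ (Fin (2 * n))

/-- The standard symplectic form on `ℝ^(2n)` with coordinates `(x₁,y₁,…,xₙ,yₙ)`. -/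
def omegaF (n : ℕ) (u v : E n) : ℝ :=
  ∑ i : Fin n,
    (u ⟨2 * i.1, by have := i.isLt; omega⟩ * v ⟨2 * i.1 + 1, by have := i.isLt; omega⟩
     - v ⟨2 * i.1, by have := i.isLt; omega⟩ * u ⟨2 * i.1 + 1, by have := i.isLt; omega⟩)

/-- The discrete symplectic area `Ŝ(γ_P)` of `γ` along the partition
`t 0 < t 1 < … < t k`:  `½ ∑_i ω(γ(t_i), γ(t_{i+1}))`, which coincides with
`½ ∑_i ∑_j (x_j(γ(t_i)) y_j(γ(t_{i+1})) − y_j(γ(t_i)) x_j(γ(t_{i+1})))`. -/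
def SHat (n : ℕ) (γ : ℝ → E n) (k : ℕ) (t : Fin (k + 1) → ℝ) : ℝ :=
  (1 / 2) * ∑ i : Fin k, omegaF n (γ (t i.castSucc)) (γ (t i.succ))

/-- The symplectic area of `γ : [a,b] → ℝ^(2n)` exists and equals `L`: for every `ε > 0`
there is `δ > 0` such that every partition `a = t₀ < … < t_k = b` of mesh `< δ` satisfies
`|Ŝ(γ_P) − L| < ε`. -/
def IsSympArea (n : ℕ) (a b : ℝ) (γ : ℝ → E n) (L : ℝ) : Prop :=
  ∀ ε > (0 : ℝ), ∃ δ > (0 : ℝ), ∀ (k : ℕ) (t : Fin (k + 1) → ℝ),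
    t 0 = a → t (Fin.last k) = b →
    (∀ i : Fin k, t i.castSucc < t i.succ) →
    (∀ i : Fin k, t i.succ - t i.castSucc < δ) →
    |SHat n γ k t - L| < ε

lemma omega_self (n : ℕ) (u : E n) : omegaF n u u = 0 := by
  simp [omegaF]

lemma omega_three (n : ℕ) (p q r : E n) :
    omegaF n p q + omegaF n q r - omegaF n p r = omegaF n (q - p) (r - q) := by
  simp only [omegaF, PiLp.sub_apply, ← Finset.sum_add_distrib, ← Finset.sum_sub_distrib]
  exact Finset.sum_congr rfl fun i _ => by ring

lemma pair_sum (n : ℕ) (g : Fin (2 * n) → ℝ) :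
    ∑ j, g j = ∑ i : Fin n,
      (g ⟨2 * i.1, by have := i.isLt; omega⟩ + g ⟨2 * i.1 + 1, by have := i.isLt; omega⟩) := by
  set G : ℕ → ℝ := fun j => if h : j < 2 * n then g ⟨j, h⟩ else 0 with hG
  have key : ∀ m : ℕ, ∑ j ∈ Finset.range (2 * m), G j
      = ∑ i ∈ Finset.range m, (G (2 * i) + G (2 * i + 1)) := by
    intro m
    induction m with
    | zero => simp
    | succ m ih =>
      have h2 : 2 * (m + 1) = (2 * m + 1) + 1 := by omega
      rw [h2, Finset.sum_range_succ, Finset.sum_range_succ, ih, Finset.sum_range_succ]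
      ring
  have h1 : ∑ j, g j = ∑ j ∈ Finset.range (2 * n), G j := by
    rw [Finset.sum_range fun j => G j]
    exact Finset.sum_congr rfl fun j _ => by simp [hG, j.isLt]
  have h2 : ∑ i : Fin n,
      (g ⟨2 * i.1, by have := i.isLt; omega⟩ + g ⟨2 * i.1 + 1, by have := i.isLt; omega⟩)
      = ∑ i ∈ Finset.range n, (G (2 * i) + G (2 * i + 1)) := by
    rw [Finset.sum_range fun i => G (2 * i) + G (2 * i + 1)]
    refine Finset.sum_congr rfl fun i _ => ?_
    have h1 : 2 * i.1 < 2 * n := by have := i.isLt; omega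
    have h2 : 2 * i.1 + 1 < 2 * n := by have := i.isLt; omega
    simp [hG, h1, h2]
  rw [h1, h2, key]

lemma omega_abs_le (n : ℕ) (u v : E n) : |omegaF n u v| ≤ ‖u‖ * ‖v‖ := by
  set A : Fin n → ℝ := fun i =>
    Real.sqrt ((u ⟨2 * i.1, by have := i.isLt; omega⟩)^2
      + (u ⟨2 * i.1 + 1, by have := i.isLt; omega⟩)^2) with hA
  set B : Fin n → ℝ := fun i =>
    Real.sqrt ((v ⟨2 * i.1, by have := i.isLt; omega⟩)^2
      + (v ⟨2 * i.1 + 1, by have := i.isLt; omega⟩)^2) with hB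
  have h1 : |omegaF n u v| ≤ ∑ i : Fin n, A i * B i := by
    refine (Finset.abs_sum_le_sum_abs _ _).trans (Finset.sum_le_sum fun i _ => ?_)
    set x := u ⟨2 * i.1, by have := i.isLt; omega⟩
    set x' := u ⟨2 * i.1 + 1, by have := i.isLt; omega⟩
    set y := v ⟨2 * i.1, by have := i.isLt; omega⟩
    set y' := v ⟨2 * i.1 + 1, by have := i.isLt; omega⟩
    have hsq : (x * y' - y * x')^2 ≤ (x^2 + x'^2) * (y^2 + y'^2) := by
      nlinarith [sq_nonneg (x * y + x' * y')]
    calc |x * y' - y * x'| = Real.sqrt ((x * y' - y * x')^2) := (Real.sqrt_sq_eq_abs _).symm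
      _ ≤ Real.sqrt ((x^2 + x'^2) * (y^2 + y'^2)) := Real.sqrt_le_sqrt hsq
      _ = A i * B i := Real.sqrt_mul (by positivity) _
  have h2 : ∑ i : Fin n, A i * B i
      ≤ Real.sqrt (∑ i, (A i)^2) * Real.sqrt (∑ i, (B i)^2) :=
    Real.sum_mul_le_sqrt_mul_sqrt _ A B
  have hnu : Real.sqrt (∑ i, (A i)^2) = ‖u‖ := by
    rw [EuclideanSpace.norm_eq]
    congr 1
    rw [pair_sum n (fun j => ‖u j‖ ^ 2)]
    refine Finset.sum_congr rfl fun i _ => ?_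
    rw [hA]
    simp only [Real.norm_eq_abs, sq_abs]
    rw [Real.sq_sqrt (by positivity)]
  have hnv : Real.sqrt (∑ i, (B i)^2) = ‖v‖ := by
    rw [EuclideanSpace.norm_eq]
    congr 1
    rw [pair_sum n (fun j => ‖v j‖ ^ 2)]
    refine Finset.sum_congr rfl fun i _ => ?_
    rw [hB]
    simp only [Real.norm_eq_abs, sq_abs]
    rw [Real.sq_sqrt (by positivity)]
  calc |omegaF n u v| ≤ ∑ i : Fin n, A i * B i := h1
    _ ≤ _ := h2
    _ = ‖u‖ * ‖v‖ := by rw [hnu, hnv]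

variable {n : ℕ}

/-- Discrete symplectic area along a list of times. -/
def STl (n : ℕ) (γ : ℝ → E n) : List ℝ → ℝ
  | x :: y :: l => (1/2) * omegaF n (γ x) (γ y) + STl n γ (y :: l)
  | _ => 0

/-- Total chord length along a list of times. -/
def VTl (n : ℕ) (γ : ℝ → E n) : List ℝ → ℝ
  | x :: y :: l => ‖γ y - γ x‖ + VTl n γ (y :: l)
  | _ => 0

@[simp] lemma STl_nil (γ : ℝ → E n) : STl n γ [] = 0 := rfl
@[simp] lemma STl_single (γ : ℝ → E n) (x : ℝ) : STl n γ [x] = 0 := rfl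
@[simp] lemma STl_cons_cons (γ : ℝ → E n) (x y : ℝ) (l : List ℝ) :
    STl n γ (x :: y :: l) = (1/2) * omegaF n (γ x) (γ y) + STl n γ (y :: l) := rfl
@[simp] lemma VTl_nil (γ : ℝ → E n) : VTl n γ [] = 0 := rfl
@[simp] lemma VTl_single (γ : ℝ → E n) (x : ℝ) : VTl n γ [x] = 0 := rfl
@[simp] lemma VTl_cons_cons (γ : ℝ → E n) (x y : ℝ) (l : List ℝ) :
    VTl n γ (x :: y :: l) = ‖γ y - γ x‖ + VTl n γ (y :: l) := rfl

lemma VTl_nonneg (γ : ℝ → E n) : ∀ l : List ℝ, 0 ≤ VTl n γ l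
  | [] => le_refl 0
  | [_] => le_refl 0
  | x :: y :: l => by
      have := VTl_nonneg γ (y :: l)
      simp only [VTl_cons_cons]
      positivity

lemma VTl_tail_le (γ : ℝ → E n) (x : ℝ) : ∀ l : List ℝ, VTl n γ l ≤ VTl n γ (x :: l)
  | [] => le_refl 0
  | y :: l => by
      simp only [VTl_cons_cons]
      have := norm_nonneg (γ y - γ x)
      linarith

lemma STl_append (γ : ℝ → E n) (m : ℝ) (l₂ : List ℝ) :
    ∀ l₁ : List ℝ, STl n γ (l₁ ++ m :: l₂) = STl n γ (l₁ ++ [m]) + STl n γ (m :: l₂)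
  | [] => by simp
  | [x] => by simp
  | x :: y :: l₁ => by
      have := STl_append γ m l₂ (y :: l₁)
      simp only [List.cons_append] at this ⊢
      simp only [STl_cons_cons, this]
      ring

lemma VTl_append (γ : ℝ → E n) (m : ℝ) (l₂ : List ℝ) :
    ∀ l₁ : List ℝ, VTl n γ (l₁ ++ m :: l₂) = VTl n γ (l₁ ++ [m]) + VTl n γ (m :: l₂)
  | [] => by simp
  | [x] => by simp
  | x :: y :: l₁ => by
      have := VTl_append γ m l₂ (y :: l₁)
      simp only [List.cons_append] at this ⊢
      simp only [VTl_cons_cons, this]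
      ring

/-- Key segment estimate: discrete area of a segment vs the single chord. -/
lemma STl_est (γ : ℝ → E n) (x : ℝ) (c : ℝ) (hc : 0 ≤ c) :
    ∀ l : List ℝ, (∀ s ∈ l, ‖γ s - γ x‖ ≤ c) →
      |STl n γ (x :: l) - (1/2) * omegaF n (γ x) (γ (l.getLastD x))|
        ≤ (1/2) * c * VTl n γ l
  | [] => by intro _; simp [omega_self]
  | [q] => by
      intro h
      simp [omega_self]
  | q :: r :: l => by
      intro h
      have ih := STl_est γ x c hc (r :: l) (fun s hs => h s (List.mem_cons_of_mem _ hs))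
      have hq : ‖γ q - γ x‖ ≤ c := h q (List.mem_cons_self)
      have h3 := omega_three n (γ x) (γ q) (γ r)
      have hω := omega_abs_le n (γ q - γ x) (γ r - γ q)
      have hlast : (q :: r :: l).getLastD x = (r :: l).getLastD x := by
        simp [List.getLastD_cons]
      rw [hlast]
      set G := (1/2) * omegaF n (γ x) (γ ((r :: l).getLastD x)) with hG
      have key : STl n γ (x :: q :: r :: l) - G
          = (1/2) * omegaF n (γ q - γ x) (γ r - γ q) + (STl n γ (x :: r :: l) - G) := by
        simp only [STl_cons_cons]
        linarith
      rw [key]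
      have hprod : ‖γ q - γ x‖ * ‖γ r - γ q‖ ≤ c * ‖γ r - γ q‖ :=
        mul_le_mul_of_nonneg_right hq (norm_nonneg _)
      calc |(1/2) * omegaF n (γ q - γ x) (γ r - γ q) + (STl n γ (x :: r :: l) - G)|
          ≤ (1/2) * |omegaF n (γ q - γ x) (γ r - γ q)| + |STl n γ (x :: r :: l) - G| := by
            have h := abs_add_le ((1/2) * omegaF n (γ q - γ x) (γ r - γ q))
              (STl n γ (x :: r :: l) - G)
            rw [abs_mul, show |(1/2:ℝ)| = 1/2 by norm_num] at h
            exact h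
        _ ≤ (1/2) * (c * ‖γ r - γ q‖) + (1/2) * c * VTl n γ (r :: l) := by
            have h12 : (0:ℝ) ≤ 1/2 := by norm_num
            have := mul_le_mul_of_nonneg_left (hω.trans hprod) h12
            linarith
        _ = (1/2) * c * VTl n γ (q :: r :: l) := by
            simp only [VTl_cons_cons]
            ring
open scoped List

lemma sublist_split {α : Type*} {a : α} : ∀ {L l : List α}, a :: l <+ L →
    ∃ A B, L = A ++ a :: B ∧ l <+ B := by
  intro L
  induction L with
  | nil => intro l h; exact absurd h (by simp)
  | cons x L ih =>
    intro l h
    rcases h with _ | @⟨_, _, _, h⟩ | @⟨_, _, _, h⟩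
    · obtain ⟨A, B, rfl, hB⟩ := ih ‹a :: l <+ L›
      exact ⟨x :: A, B, by simp, hB⟩
    · exact ⟨[], L, rfl, ‹l <+ L›⟩

lemma sorted_head_le {l : List ℝ} {x s : ℝ} (hs : l.Pairwise (· ≤ ·))
    (hh : l.head? = some x) (hm : s ∈ l) : x ≤ s := by
  cases l with
  | nil => simp at hm
  | cons y t =>
    simp only [List.head?_cons, Option.some.injEq] at hh
    subst hh
    rcases List.mem_cons.mp hm with rfl | hm
    · exact le_refl _
    · exact List.rel_of_pairwise_cons hs (a' := _) hm

lemma sorted_le_getLast : ∀ {l : List ℝ} {y s : ℝ}, l.Pairwise (· ≤ ·) →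
    l.getLast? = some y → s ∈ l → s ≤ y := by
  intro l
  induction l with
  | nil => intro y s _ _ hm; simp at hm
  | cons a t ih =>
    intro y s hs hl hm
    cases t with
    | nil =>
      simp only [List.getLast?_singleton, Option.some.injEq] at hl
      subst hl
      have : s = a := by simpa using hm
      exact this.le
    | cons b t' =>
      rw [List.getLast?_cons_cons] at hl
      rcases List.mem_cons.mp hm with rfl | hm
      · exact (List.rel_of_pairwise_cons hs (a' := b) (List.mem_cons_self)).trans
          (ih hs.of_cons hl (List.mem_cons_self))
      · exact ih hs.of_cons hl hm

lemma STl_const (γ : ℝ → E n) (x : ℝ) :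
    ∀ l : List ℝ, (∀ s ∈ l, s = x) → STl n γ l = 0
  | [] => fun _ => rfl
  | [_] => fun _ => rfl
  | a :: b :: l => by
      intro h
      have ha : a = x := h a (by simp)
      have hb : b = x := h b (by simp)
      have hrec := STl_const γ x (b :: l) (fun s hs => h s (List.mem_cons_of_mem _ hs))
      rw [hb] at hrec
      simp [ha, hb, omega_self, hrec]

/-- The refinement estimate: if `T'` is a sorted refinement of `T` with the same endpoints,
`T` has mesh `< δ` and `γ`-chords over time gaps `< δ` are bounded by `c`, then the discrete
areas of `T` and `T'` differ by at most `½ c · (chord length of T')`. -/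
lemma refine_est (γ : ℝ → E n) (δ c : ℝ) (hc : 0 ≤ c) :
    ∀ (T T' : List ℝ), T <+ T' → T'.Pairwise (· ≤ ·) →
    T.head? = T'.head? → T.getLast? = T'.getLast? →
    List.IsChain (fun s t => t - s < δ) T →
    (∀ s ∈ T', ∀ t ∈ T', |s - t| < δ → ‖γ s - γ t‖ ≤ c) →
    |STl n γ T' - STl n γ T| ≤ (1/2) * c * VTl n γ T'
  | [], T', hsub, hsort, hhead, hlast, hchain, hU => by
      cases T' with
      | nil => simpa using mul_nonneg (mul_nonneg (by norm_num) hc) (VTl_nonneg γ [])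
      | cons a t => simp at hhead
  | [x], T', hsub, hsort, hhead, hlast, hchain, hU => by
      have hconst : ∀ s ∈ T', s = x := by
        intro s hs
        have h1 : x ≤ s := sorted_head_le hsort (by simpa using hhead.symm) hs
        have h2 : s ≤ x := sorted_le_getLast hsort (by simpa using hlast.symm) hs
        linarith
      rw [STl_const γ x T' hconst]
      simpa using mul_nonneg (mul_nonneg (by norm_num) hc) (VTl_nonneg γ T')
  | x :: y :: rest, T', hsub, hsort, hhead, hlast, hchain, hU => by
      -- T' = x :: U
      obtain ⟨U, rfl⟩ : ∃ U, T' = x :: U := by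
        cases T' with
        | nil => simp at hhead
        | cons a U =>
          simp only [List.head?_cons, Option.some.injEq] at hhead
          exact ⟨U, by rw [hhead]⟩
      have hsub' : y :: rest <+ U := List.cons_sublist_cons.mp hsub
      obtain ⟨A, B, rfl, hrest⟩ := sublist_split hsub'
      -- T' = (x :: A) ++ (y :: B)
      have hT' : x :: (A ++ y :: B) = (x :: A) ++ (y :: B) := by simp
      have hxy : y - x < δ := hchain.rel_head
      -- elements of A ++ [y] are between x and y
      have hbet : ∀ s ∈ A ++ [y], x ≤ s ∧ s ≤ y := by
        intro s hs
        have hsT' : s ∈ x :: (A ++ y :: B) := by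
          rcases List.mem_append.mp hs with hs | hs
          · exact List.mem_cons_of_mem _ (List.mem_append_left _ hs)
          · simp only [List.mem_singleton] at hs
            subst hs
            exact List.mem_cons_of_mem _ (List.mem_append_right _ (List.mem_cons_self))
        constructor
        · exact sorted_head_le hsort (by simp) hsT'
        · rcases List.mem_append.mp hs with hs | hs
          · exact (List.pairwise_append.mp hsort.of_cons).2.2 s hs y (List.mem_cons_self)
          · simp only [List.mem_singleton] at hs; exact hs.le
      have hmemT' : ∀ s ∈ A ++ [y], s ∈ x :: (A ++ y :: B) := by
        intro s hs
        rcases List.mem_append.mp hs with hs | hs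
        · exact List.mem_cons_of_mem _ (List.mem_append_left _ hs)
        · simp only [List.mem_singleton] at hs
          subst hs
          exact List.mem_cons_of_mem _ (List.mem_append_right _ (List.mem_cons_self))
      -- segment estimate for the part of T' between x and y
      have hseg : |STl n γ (x :: (A ++ [y])) - (1/2) * omegaF n (γ x) (γ y)|
          ≤ (1/2) * c * VTl n γ (A ++ [y]) := by
        have hlastD : (A ++ [y]).getLastD x = y := List.getLastD_concat
        have hmem : ∀ s ∈ A ++ [y], ‖γ s - γ x‖ ≤ c := by
          intro s hs
          obtain ⟨h1, h2⟩ := hbet s hs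
          refine hU s (hmemT' s hs) x (List.mem_cons_self) ?_
          rw [abs_of_nonneg (by linarith)]
          linarith
        have := STl_est γ x c hc (A ++ [y]) hmem
        rwa [hlastD] at this
      -- inductive estimate for the rest
      have hsort2 : ((x :: A) ++ (y :: B)).Pairwise (· ≤ ·) := by simpa using hsort
      have hsortyB : (y :: B).Pairwise (· ≤ ·) :=
        List.Pairwise.sublist (List.sublist_append_right (x :: A) (y :: B)) hsort2
      have hlastyB : (y :: rest).getLast? = (y :: B).getLast? := by
        have h1 : (x :: y :: rest).getLast? = (y :: rest).getLast? := List.getLast?_cons_cons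
        obtain ⟨z, hz⟩ : ∃ z, (y :: B).getLast? = some z :=
          ⟨(y :: B).getLast (by simp), List.getLast?_eq_getLast _⟩
        have h2 : (x :: (A ++ y :: B)).getLast? = (y :: B).getLast? := by
          rw [show x :: (A ++ y :: B) = (x :: A) ++ (y :: B) by simp, List.getLast?_append, hz]
          rfl
        rw [← h1, hlast, h2]
      have hUyB : ∀ s ∈ y :: B, ∀ t ∈ y :: B, |s - t| < δ → ‖γ s - γ t‖ ≤ c := by
        intro s hs t ht
        have hmemyB : ∀ u, u ∈ y :: B → u ∈ x :: (A ++ y :: B) := by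
          intro u hu
          exact List.mem_cons_of_mem _ (List.mem_append_right _ hu)
        exact hU s (hmemyB s hs) t (hmemyB t ht)
      have hIH := refine_est γ δ c hc (y :: rest) (y :: B)
        (List.cons_sublist_cons.mpr hrest) hsortyB rfl hlastyB hchain.tail hUyB
      -- combine
      have hsplitS : STl n γ ((x :: A) ++ y :: B)
          = STl n γ ((x :: A) ++ [y]) + STl n γ (y :: B) := STl_append γ y B (x :: A)
      have hsplitV : VTl n γ ((x :: A) ++ y :: B)
          = VTl n γ ((x :: A) ++ [y]) + VTl n γ (y :: B) := VTl_append γ y B (x :: A)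
      have hTeq : STl n γ (x :: y :: rest)
          = (1/2) * omegaF n (γ x) (γ y) + STl n γ (y :: rest) := rfl
      have hca : x :: (A ++ [y]) = (x :: A) ++ [y] := by simp
      have hca2 : x :: (A ++ y :: B) = (x :: A) ++ y :: B := by simp
      have hVmono : VTl n γ (A ++ [y]) ≤ VTl n γ ((x :: A) ++ [y]) := by
        rw [← hca]; exact VTl_tail_le γ x (A ++ [y])
      have habs := abs_add_le (STl n γ ((x :: A) ++ [y]) - (1/2) * omegaF n (γ x) (γ y))
        (STl n γ (y :: B) - STl n γ (y :: rest))
      rw [hca2, hsplitS, hsplitV, hTeq]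
      rw [hca] at hseg
      have hVB : 0 ≤ VTl n γ (y :: B) := VTl_nonneg γ _
      have hVA : 0 ≤ VTl n γ (A ++ [y]) := VTl_nonneg γ _
      have e1 : STl n γ ((x :: A) ++ [y]) + STl n γ (y :: B)
          - ((1/2) * omegaF n (γ x) (γ y) + STl n γ (y :: rest))
          = (STl n γ ((x :: A) ++ [y]) - (1/2) * omegaF n (γ x) (γ y))
            + (STl n γ (y :: B) - STl n γ (y :: rest)) := by ring
      rw [e1]
      calc |(STl n γ ((x :: A) ++ [y]) - (1/2) * omegaF n (γ x) (γ y))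
            + (STl n γ (y :: B) - STl n γ (y :: rest))|
          ≤ |STl n γ ((x :: A) ++ [y]) - (1/2) * omegaF n (γ x) (γ y)|
            + |STl n γ (y :: B) - STl n γ (y :: rest)| := habs
        _ ≤ (1/2) * c * VTl n γ (A ++ [y]) + (1/2) * c * VTl n γ (y :: B) := by
            exact add_le_add hseg hIH
        _ ≤ (1/2) * c * (VTl n γ ((x :: A) ++ [y]) + VTl n γ (y :: B)) := by
            have h12c : (0:ℝ) ≤ (1/2) * c := by positivity
            nlinarith [mul_le_mul_of_nonneg_left hVmono h12c]

lemma VTl_le_aux (γ : ℝ → E n) (a b : ℝ) (hlen : eVariationOn γ (Icc a b) ≠ ⊤) :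
    ∀ (l : List ℝ) (x : ℝ), (x :: l).Pairwise (· ≤ ·) → (∀ s ∈ x :: l, s ∈ Icc a b) →
      VTl n γ (x :: l) ≤ (eVariationOn γ (Icc x b)).toReal
  | [], x => fun _ _ => by simpa using ENNReal.toReal_nonneg
  | q :: l', x => by
      intro hsort hmem
      have hxq : x ≤ q := List.rel_of_pairwise_cons hsort (a' := q) (List.mem_cons_self)
      have hx : x ∈ Icc a b := hmem x (List.mem_cons_self)
      have hq : q ∈ Icc a b := hmem q (List.mem_cons_of_mem _ (List.mem_cons_self))
      have hsub1 : Icc x q ⊆ Icc a b := Icc_subset_Icc hx.1 hq.2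
      have hsub2 : Icc q b ⊆ Icc a b := Icc_subset_Icc hq.1 le_rfl
      have hsub3 : Icc x b ⊆ Icc a b := Icc_subset_Icc hx.1 le_rfl
      have hfin1 : eVariationOn γ (Icc x q) ≠ ⊤ :=
        fun h => hlen (top_le_iff.mp (h ▸ eVariationOn.mono γ hsub1))
      have hfin2 : eVariationOn γ (Icc q b) ≠ ⊤ :=
        fun h => hlen (top_le_iff.mp (h ▸ eVariationOn.mono γ hsub2))
      have hdist : dist (γ q) (γ x) ≤ (eVariationOn γ (Icc x q)).toReal :=
        BoundedVariationOn.dist_le hfin1 ⟨hxq, le_rfl⟩ ⟨le_rfl, hxq⟩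
      have ih := VTl_le_aux γ a b hlen l' q hsort.of_cons
        (fun s hs => hmem s (List.mem_cons_of_mem _ hs))
      have hadd : eVariationOn γ (Icc x q) + eVariationOn γ (Icc q b)
          = eVariationOn γ (Icc x b) := by
        have h := eVariationOn.Icc_add_Icc γ (s := Icc a b) hxq hq.2 hq
        rwa [Set.inter_eq_right.mpr hsub1, Set.inter_eq_right.mpr hsub2,
          Set.inter_eq_right.mpr hsub3] at h
      have htr : (eVariationOn γ (Icc x q)).toReal + (eVariationOn γ (Icc q b)).toReal
          = (eVariationOn γ (Icc x b)).toReal := by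
        rw [← ENNReal.toReal_add hfin1 hfin2, hadd]
      have hnorm : ‖γ q - γ x‖ = dist (γ q) (γ x) := (dist_eq_norm _ _).symm
      rw [VTl_cons_cons]
      linarith

lemma VTl_le (γ : ℝ → E n) (a b : ℝ) (hlen : eVariationOn γ (Icc a b) ≠ ⊤)
    (l : List ℝ) (hsort : l.Pairwise (· ≤ ·)) (hmem : ∀ s ∈ l, s ∈ Icc a b) :
    VTl n γ l ≤ (eVariationOn γ (Icc a b)).toReal := by
  cases l with
  | nil => simpa using ENNReal.toReal_nonneg
  | cons x l' =>
    have hx : x ∈ Icc a b := hmem x (List.mem_cons_self)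
    refine (VTl_le_aux γ a b hlen l' x hsort hmem).trans ?_
    exact ENNReal.toReal_mono hlen (eVariationOn.mono γ (Icc_subset_Icc hx.1 le_rfl))

lemma STl_cons_ofFn (γ : ℝ → E n) (x : ℝ) (k : ℕ) (t : Fin (k+1) → ℝ) :
    STl n γ (x :: List.ofFn t)
      = (1/2) * omegaF n (γ x) (γ (t 0)) + STl n γ (List.ofFn t) := by
  rw [List.ofFn_succ, STl_cons_cons, ← List.ofFn_succ]

lemma STl_ofFn (γ : ℝ → E n) :
    ∀ (k : ℕ) (t : Fin (k+1) → ℝ),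
      STl n γ (List.ofFn t)
        = (1/2) * ∑ i : Fin k, omegaF n (γ (t i.castSucc)) (γ (t i.succ))
  | 0, t => by simp [List.ofFn_succ]
  | (k+1), t => by
      have ih := STl_ofFn γ k (fun i => t i.succ)
      rw [List.ofFn_succ, STl_cons_ofFn, ih, Fin.sum_univ_succ]
      simp only [Fin.succ_castSucc, Fin.castSucc_zero]
      ring

lemma head?_ofFn (k : ℕ) (t : Fin (k+1) → ℝ) : (List.ofFn t).head? = some (t 0) := by
  rw [List.ofFn_succ]; rfl

lemma getLast?_ofFn (k : ℕ) (t : Fin (k+1) → ℝ) :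
    (List.ofFn t).getLast? = some (t (Fin.last k)) := by
  have hne : List.ofFn t ≠ [] := by simp [List.ofFn_eq_nil_iff]
  rw [List.getLast?_eq_getLast hne, List.getLast_ofFn]
  rfl

lemma mem_of_getLast?_eq {l : List ℝ} {y : ℝ} (h : l.getLast? = some y) : y ∈ l := by
  cases l with
  | nil => simp at h
  | cons x t =>
    rw [List.getLast?_eq_getLast (by simp)] at h
    obtain rfl : (x :: t).getLast (by simp) = y := by injection h
    exact List.getLast_mem _

lemma mem_of_head?_eq {l : List ℝ} {y : ℝ} (h : l.head? = some y) : y ∈ l := by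
  cases l with
  | nil => simp at h
  | cons x t =>
    obtain rfl : x = y := by injection h
    exact List.mem_cons_self

lemma sorted_min_head? {l : List ℝ} {a : ℝ} (hs : l.Pairwise (· ≤ ·)) (ha : a ∈ l)
    (hall : ∀ s ∈ l, a ≤ s) : l.head? = some a := by
  cases l with
  | nil => simp at ha
  | cons x t =>
    have h1 : a ≤ x := hall x (List.mem_cons_self)
    have h2 : x ≤ a := by
      rcases List.mem_cons.mp ha with rfl | ha
      · exact le_refl _
      · exact List.rel_of_pairwise_cons hs (a' := a) ha
    rw [le_antisymm h2 h1]
    rfl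

lemma sorted_max_getLast? : ∀ {l : List ℝ} {b : ℝ}, l.Pairwise (· ≤ ·) → b ∈ l →
    (∀ s ∈ l, s ≤ b) → l.getLast? = some b := by
  intro l
  induction l with
  | nil => intro b _ hb _; simp at hb
  | cons x t ih =>
    intro b hs hb hall
    cases t with
    | nil =>
      have : b = x := by simpa using hb
      simp [this]
    | cons y t' =>
      rw [List.getLast?_cons_cons]
      have hxy : x ≤ y := List.rel_of_pairwise_cons hs (a' := y) (List.mem_cons_self)
      have hbyt : b ∈ y :: t' := by
        rcases List.mem_cons.mp hb with rfl | hb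
        · have hyb : y ≤ b := hall y (List.mem_cons_of_mem _ (List.mem_cons_self))
          have : y = b := le_antisymm hyb hxy
          rw [← this]
          exact List.mem_cons_self
        · exact hb
      exact ih hs.of_cons hbyt (fun s hsm => hall s (List.mem_cons_of_mem _ hsm))

lemma STl_compare (γ : ℝ → E n) (a b : ℝ) (hlen : eVariationOn γ (Icc a b) ≠ ⊤)
    (δ c : ℝ) (hc : 0 ≤ c)
    (hU : ∀ s ∈ Icc a b, ∀ t ∈ Icc a b, |s - t| < δ → ‖γ s - γ t‖ ≤ c)
    (P Q : List ℝ)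
    (hPs : P.Pairwise (· ≤ ·)) (hPm : ∀ s ∈ P, s ∈ Icc a b) (hPh : P.head? = some a)
    (hPl : P.getLast? = some b) (hPc : List.IsChain (fun s t => t - s < δ) P)
    (hQs : Q.Pairwise (· ≤ ·)) (hQm : ∀ s ∈ Q, s ∈ Icc a b) (hQh : Q.head? = some a)
    (hQl : Q.getLast? = some b) (hQc : List.IsChain (fun s t => t - s < δ) Q) :
    |STl n γ P - STl n γ Q| ≤ c * (eVariationOn γ (Icc a b)).toReal := by
  classical
  set M := (P ++ Q).mergeSort with hM
  have trans : ∀ (x y z : ℝ), (fun x y : ℝ => (decide (x ≤ y))) x y →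
      (fun x y : ℝ => (decide (x ≤ y))) y z → (fun x y : ℝ => (decide (x ≤ y))) x z :=
    fun x y z h₁ h₂ => by simpa using le_trans (by simpa using h₁) (by simpa using h₂)
  have total : ∀ (x y : ℝ), ((fun x y : ℝ => (decide (x ≤ y))) x y
      || (fun x y : ℝ => (decide (x ≤ y))) y x) :=
    fun x y => by simpa using le_total x y
  have hMs : M.Pairwise (· ≤ ·) := List.pairwise_mergeSort' _ _
  have hPM : P <+ M :=
    List.sublist_mergeSort trans total
      (hPs.imp (fun h => by simpa using h)) (List.sublist_append_left P Q)
  have hQM : Q <+ M :=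
    List.sublist_mergeSort trans total
      (hQs.imp (fun h => by simpa using h)) (List.sublist_append_right P Q)
  have hMm : ∀ s ∈ M, s ∈ Icc a b := by
    intro s hs
    rw [hM, List.mem_mergeSort] at hs
    rcases List.mem_append.mp hs with hs | hs
    · exact hPm s hs
    · exact hQm s hs
  have haM : a ∈ M := hPM.mem (mem_of_head?_eq hPh)
  have hbM : b ∈ M := hPM.mem (mem_of_getLast?_eq hPl)
  have hMh : M.head? = some a := sorted_min_head? hMs haM (fun s hs => (hMm s hs).1)
  have hMl : M.getLast? = some b := sorted_max_getLast? hMs hbM (fun s hs => (hMm s hs).2)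
  have hUM : ∀ s ∈ M, ∀ t ∈ M, |s - t| < δ → ‖γ s - γ t‖ ≤ c :=
    fun s hs t ht => hU s (hMm s hs) t (hMm t ht)
  have h1 := refine_est γ δ c hc P M hPM hMs (hPh.trans hMh.symm) (hPl.trans hMl.symm) hPc hUM
  have h2 := refine_est γ δ c hc Q M hQM hMs (hQh.trans hMh.symm) (hQl.trans hMl.symm) hQc hUM
  have hVM : VTl n γ M ≤ (eVariationOn γ (Icc a b)).toReal := VTl_le γ a b hlen M hMs hMm
  have htri : |STl n γ P - STl n γ Q|
      ≤ |STl n γ M - STl n γ P| + |STl n γ M - STl n γ Q| := by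
    have := abs_sub_le (STl n γ P) (STl n γ M) (STl n γ Q)
    rwa [abs_sub_comm (STl n γ P) (STl n γ M)] at this
  have hmul : (1/2) * c * VTl n γ M ≤ (1/2) * c * (eVariationOn γ (Icc a b)).toReal :=
    mul_le_mul_of_nonneg_left hVM (by positivity)
  linarith

lemma chain'_ofFn (R : ℝ → ℝ → Prop) :
    ∀ (k : ℕ) (t : Fin (k+1) → ℝ), (∀ i : Fin k, R (t i.castSucc) (t i.succ)) →
      List.IsChain R (List.ofFn t)
  | 0, t, _ => by simp [List.ofFn_succ]
  | (k+1), t, h => by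
      have ih := chain'_ofFn R k (fun i => t i.succ)
        (fun i => by have := h i.succ; rwa [← Fin.succ_castSucc] at this)
      rw [List.ofFn_succ, List.isChain_cons]
      refine ⟨?_, ih⟩
      intro y hy
      rw [head?_ofFn] at hy
      obtain rfl : t (Fin.succ 0) = y := by simpa using hy
      simpa using h 0

lemma partition_list_facts (a b : ℝ) (k : ℕ) (t : Fin (k+1) → ℝ)
    (h0 : t 0 = a) (hl : t (Fin.last k) = b)
    (hstep : ∀ i : Fin k, t i.castSucc < t i.succ) :
    (List.ofFn t).Pairwise (· ≤ ·) ∧ (∀ s ∈ List.ofFn t, s ∈ Icc a b) ∧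
    (List.ofFn t).head? = some a ∧ (List.ofFn t).getLast? = some b := by
  have hmono : StrictMono t := Fin.strictMono_iff_lt_succ.mpr hstep
  refine ⟨?_, ?_, ?_, ?_⟩
  · exact List.pairwise_ofFn.mpr (fun i j hij => (hmono hij).le)
  · intro s hs
    rw [List.mem_ofFn] at hs
    obtain ⟨i, rfl⟩ := hs
    exact ⟨h0 ▸ hmono.monotone (Fin.zero_le i), hl ▸ hmono.monotone (Fin.le_last i)⟩
  · rw [head?_ofFn, h0]
  · rw [getLast?_ofFn, hl]

lemma SHat_eq_STl (γ : ℝ → E n) (k : ℕ) (t : Fin (k+1) → ℝ) :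
    SHat n γ k t = STl n γ (List.ofFn t) :=
  (STl_ofFn γ k t).symm

lemma SHat_compare (γ : ℝ → E n) (a b : ℝ) (hlen : eVariationOn γ (Icc a b) ≠ ⊤)
    (δ c : ℝ) (hc : 0 ≤ c)
    (hU : ∀ s ∈ Icc a b, ∀ u ∈ Icc a b, |s - u| < δ → ‖γ s - γ u‖ ≤ c)
    (k k' : ℕ) (t : Fin (k+1) → ℝ) (t' : Fin (k'+1) → ℝ)
    (h0 : t 0 = a) (hl : t (Fin.last k) = b)
    (hstep : ∀ i : Fin k, t i.castSucc < t i.succ)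
    (hmesh : ∀ i : Fin k, t i.succ - t i.castSucc < δ)
    (h0' : t' 0 = a) (hl' : t' (Fin.last k') = b)
    (hstep' : ∀ i : Fin k', t' i.castSucc < t' i.succ)
    (hmesh' : ∀ i : Fin k', t' i.succ - t' i.castSucc < δ) :
    |SHat n γ k t - SHat n γ k' t'| ≤ c * (eVariationOn γ (Icc a b)).toReal := by
  obtain ⟨hs1, hm1, hh1, hl1⟩ := partition_list_facts a b k t h0 hl hstep
  obtain ⟨hs2, hm2, hh2, hl2⟩ := partition_list_facts a b k' t' h0' hl' hstep'
  have hc1 : List.IsChain (fun s u => u - s < δ) (List.ofFn t) := chain'_ofFn _ k t hmesh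
  have hc2 : List.IsChain (fun s u => u - s < δ) (List.ofFn t') := chain'_ofFn _ k' t' hmesh'
  rw [SHat_eq_STl, SHat_eq_STl]
  exact STl_compare γ a b hlen δ c hc hU (List.ofFn t) (List.ofFn t')
    hs1 hm1 hh1 hl1 hc1 hs2 hm2 hh2 hl2 hc2

lemma SHat_closed_bound (γ : ℝ → E n) (a b : ℝ) (hab : a ≤ b)
    (hclosed : γ a = γ b) (hlen : eVariationOn γ (Icc a b) ≠ ⊤)
    (k : ℕ) (t : Fin (k+1) → ℝ)
    (h0 : t 0 = a) (hl : t (Fin.last k) = b)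
    (hstep : ∀ i : Fin k, t i.castSucc < t i.succ) :
    |SHat n γ k t| ≤ (1/2) * (eVariationOn γ (Icc a b)).toReal ^ 2 := by
  set L := (eVariationOn γ (Icc a b)).toReal with hLdef
  have hL0 : 0 ≤ L := ENNReal.toReal_nonneg
  obtain ⟨hs1, hm1, hh1, hl1⟩ := partition_list_facts a b k t h0 hl hstep
  obtain ⟨rest, hrest⟩ : ∃ rest, List.ofFn t = a :: rest := by
    cases hofn : List.ofFn t with
    | nil => rw [hofn] at hh1; simp at hh1
    | cons x r =>
      rw [hofn] at hh1
      obtain rfl : x = a := by injection hh1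
      exact ⟨r, rfl⟩
  have hlastD : rest.getLastD a = b := by
    have h := hl1
    rw [hrest, List.getLast?_cons, Option.some_inj] at h
    rw [List.getLastD_eq_getLast?]
    exact h
  have hchord : ∀ s ∈ rest, ‖γ s - γ a‖ ≤ L := by
    intro s hs
    have hsmem : s ∈ Icc a b := hm1 s (hrest ▸ List.mem_cons_of_mem _ hs)
    have := BoundedVariationOn.dist_le (E := E n) hlen hsmem (left_mem_Icc.mpr hab)
    rwa [dist_eq_norm] at this
  have hST := STl_est γ a L hL0 rest hchord
  rw [hlastD, hclosed, omega_self, mul_zero, sub_zero] at hST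
  have hVrest : VTl n γ rest ≤ L := by
    refine le_trans (VTl_tail_le γ a rest) ?_
    rw [← hrest]
    exact VTl_le γ a b hlen _ hs1 hm1
  rw [SHat_eq_STl, hrest]
  calc |STl n γ (a :: rest)| ≤ (1/2) * L * VTl n γ rest := hST
    _ ≤ (1/2) * L ^ 2 := by nlinarith

/-- **Isoperimetric-type bound for the symplectic area of closed rectifiable curves**
(Lemma 2.12(3)).  If `γ : [a,b] → ℝ^(2n)` is a continuous closed curve of finite length
(total variation) `ℓ(γ)`, then the symplectic area `S(γ)` exists and `|S(γ)| ≤ ℓ(γ)²`. -/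
theorem symp_area_isoperimetric (n : ℕ) (hn : 1 ≤ n) (a b : ℝ) (hab : a < b)
    (γ : ℝ → E n)
    (hcont : ContinuousOn γ (Icc a b))
    (hclosed : γ a = γ b)
    (hlen : eVariationOn γ (Icc a b) ≠ ⊤) :
    ∃ S : ℝ, IsSympArea n a b γ S ∧
      |S| ≤ (eVariationOn γ (Icc a b)).toReal ^ 2 := by
  set L := (eVariationOn γ (Icc a b)).toReal with hLdef
  have hL0 : 0 ≤ L := ENNReal.toReal_nonneg
  have hba : 0 < b - a := by linarith
  -- uniform continuity modulus
  have key : ∀ c : ℝ, 0 < c → ∃ δ > (0:ℝ),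
      ∀ s ∈ Icc a b, ∀ u ∈ Icc a b, |s - u| < δ → ‖γ s - γ u‖ ≤ c := by
    intro c hc
    have hUC := isCompact_Icc.uniformContinuousOn_of_continuous hcont
    rw [Metric.uniformContinuousOn_iff] at hUC
    obtain ⟨δ, hδ, H⟩ := hUC c hc
    refine ⟨δ, hδ, fun s hs u hu hsu => ?_⟩
    have := H s hs u hu (by rwa [Real.dist_eq])
    rw [dist_eq_norm] at this
    exact this.le
  -- the uniform partitions
  set T : ∀ m : ℕ, Fin (m + 1 + 1) → ℝ := fun m i => a + i * (b - a) / (m + 1) with hT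
  have hT0 : ∀ m, T m 0 = a := by intro m; simp [hT]
  have hTlast : ∀ m, T m (Fin.last (m + 1)) = b := by
    intro m
    have hm : ((m:ℝ) + 1) ≠ 0 := by positivity
    simp only [hT, Fin.val_last]
    push_cast
    field_simp
    ring
  have hTgap : ∀ m (i : Fin (m + 1)), T m i.succ - T m i.castSucc = (b - a) / (m + 1) := by
    intro m i
    simp only [hT, Fin.val_succ, Fin.coe_castSucc]
    push_cast
    ring
  have hmeshpos : ∀ m : ℕ, 0 < (b - a) / (m + 1) := by
    intro m; positivity
  have hTstep : ∀ m (i : Fin (m + 1)), T m i.castSucc < T m i.succ := by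
    intro m i
    have h := hmeshpos m
    rw [← hTgap m i] at h
    linarith
  set s : ℕ → ℝ := fun m => SHat n γ (m + 1) (T m) with hs
  -- mesh bound
  have hmesh_lt : ∀ {δ : ℝ} {N m : ℕ}, 0 < δ → (b - a) / (N + 1) < δ → N ≤ m →
      ∀ i : Fin (m + 1), T m i.succ - T m i.castSucc < δ := by
    intro δ N m hδ hN hNm i
    rw [hTgap m i]
    have h1 : (b - a) / (m + 1) ≤ (b - a) / (N + 1) := by
      apply div_le_div_of_nonneg_left hba.le (by positivity)
      exact_mod_cast by omega
    linarith
  -- existence of small mesh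
  have exN : ∀ δ : ℝ, 0 < δ → ∃ N : ℕ, (b - a) / (N + 1) < δ := by
    intro δ hδ
    obtain ⟨N, hN⟩ := exists_nat_gt ((b - a) / δ)
    refine ⟨N, ?_⟩
    rw [div_lt_iff₀ (by positivity)]
    rw [div_lt_iff₀ hδ] at hN
    nlinarith [hδ.le]
  -- Cauchy
  have hcauchy : CauchySeq s := by
    rw [Metric.cauchySeq_iff]
    intro ε hε
    set c : ℝ := ε / (2 * (L + 1)) with hcdef
    have hc : 0 < c := by positivity
    obtain ⟨δ, hδ, HU⟩ := key c hc
    obtain ⟨N, hN⟩ := exN δ hδ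
    refine ⟨N, fun p hp q hq => ?_⟩
    have h := SHat_compare γ a b hlen δ c hc.le HU (p + 1) (q + 1) (T p) (T q)
      (hT0 p) (hTlast p) (hTstep p) (hmesh_lt hδ hN hp)
      (hT0 q) (hTlast q) (hTstep q) (hmesh_lt hδ hN hq)
    rw [Real.dist_eq]
    have hcL : c * L < ε := by
      rw [hcdef]
      rw [div_mul_eq_mul_div, div_lt_iff₀ (by positivity)]
      nlinarith
    exact lt_of_le_of_lt h hcL
  obtain ⟨S, hS⟩ := cauchySeq_tendsto_of_complete hcauchy
  refine ⟨S, ?_, ?_⟩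
  · intro ε hε
    set c : ℝ := ε / (4 * (L + 1)) with hcdef
    have hc : 0 < c := by positivity
    obtain ⟨δ, hδ, HU⟩ := key c hc
    refine ⟨δ, hδ, ?_⟩
    intro k t h0 hl hstep hmesh
    match k, t, h0, hl, hstep, hmesh with
    | 0, t, h0, hl, hstep, hmesh =>
      exact absurd (h0.symm.trans hl) hab.ne
    | (k+1), t, h0, hl, hstep, hmesh =>
      -- choose m with small mesh and s m close to S
      obtain ⟨N₁, hN₁⟩ := exN δ hδ
      have htend := Metric.tendsto_atTop.mp hS (ε/4) (by positivity)
      obtain ⟨N₂, hN₂⟩ := htend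
      set m := max N₁ N₂ with hm
      have hcomp := SHat_compare γ a b hlen δ c hc.le HU (k + 1) (m + 1) t (T m)
        h0 hl hstep hmesh
        (hT0 m) (hTlast m) (hTstep m) (hmesh_lt hδ hN₁ (le_max_left _ _))
      have hclose : dist (s m) S < ε/4 := hN₂ m (le_max_right _ _)
      rw [Real.dist_eq] at hclose
      have hcL : c * L ≤ ε/4 := by
        rw [hcdef, div_mul_eq_mul_div, div_le_div_iff₀ (by positivity) (by norm_num)]
        nlinarith
      have htri : |SHat n γ (k+1) t - S|
          ≤ |SHat n γ (k+1) t - s m| + |s m - S| := abs_sub_le _ _ _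
      have : |SHat n γ (k+1) t - s m| ≤ ε / 4 := le_trans hcomp hcL
      calc |SHat n γ (k+1) t - S| ≤ |SHat n γ (k+1) t - s m| + |s m - S| := htri
        _ < ε/4 + ε/4 := by linarith
        _ < ε := by linarith
  · have hb : ∀ m, |s m| ≤ (1/2) * L^2 := fun m =>
      SHat_closed_bound γ a b hab.le hclosed hlen (m + 1) (T m)
        (hT0 m) (hTlast m) (hTstep m)
    have habs : Tendsto (fun m => |s m|) atTop (nhds |S|) := hS.abs
    have hle : |S| ≤ (1/2) * L^2 := le_of_tendsto habs (Filter.Eventually.of_forall hb)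
    nlinarith
end
end

section
/- Continuity of symplectic area under uniform convergence with bounded lengths: let γ, γ_i : [a,b] → ℝ^(2n) (i ∈ ℕ) be continuous curves of finite length (finite total variation), suppose γ_i → γ uniformly on [a,b], and suppose sup_{i} ℓ(γ_i) < ∞. Then the symplectic areas S(γ) and S(γ_i) all exist and lim_{i→∞} S(γ_i) = S(γ). -/
open MeasureTheory Set Filter Topology
open scoped ENNReal

noncomputable section

namespace SA

variable {n : ℕ}

lemma apply_le_norm (u : E n) (j : Fin (2*n)) : |u j| ≤ ‖u‖ := by
  rw [EuclideanSpace.norm_eq]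
  rw [← Real.sqrt_sq_eq_abs]
  apply Real.sqrt_le_sqrt
  calc u j ^ 2 = ‖u j‖^2 := by rw [Real.norm_eq_abs, sq_abs]
    _ ≤ ∑ i, ‖u i‖ ^ 2 := Finset.single_le_sum (f := fun i => ‖u i‖^2) (fun i _ => by positivity) (Finset.mem_univ j)

lemma omegaF_bound (u v : E n) : |omegaF n u v| ≤ (2*n) * (‖u‖ * ‖v‖) := by
  unfold omegaF
  calc |∑ i : Fin n, _| ≤ ∑ i : Fin n, |(u ⟨2 * i.1, by have := i.isLt; omega⟩ * v ⟨2 * i.1 + 1, by have := i.isLt; omega⟩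
     - v ⟨2 * i.1, by have := i.isLt; omega⟩ * u ⟨2 * i.1 + 1, by have := i.isLt; omega⟩)| := Finset.abs_sum_le_sum_abs _ _
    _ ≤ ∑ _i : Fin n, 2 * (‖u‖ * ‖v‖) := by
        apply Finset.sum_le_sum
        intro i _
        have h1 := apply_le_norm u ⟨2 * i.1, by have := i.isLt; omega⟩
        have h2 := apply_le_norm v ⟨2 * i.1 + 1, by have := i.isLt; omega⟩
        have h3 := apply_le_norm v ⟨2 * i.1, by have := i.isLt; omega⟩
        have h4 := apply_le_norm u ⟨2 * i.1 + 1, by have := i.isLt; omega⟩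
        calc |_ - _| ≤ |u ⟨2 * i.1, _⟩ * v ⟨2 * i.1 + 1, _⟩| + |v ⟨2 * i.1, _⟩ * u ⟨2 * i.1 + 1, _⟩| := abs_sub _ _
          _ ≤ ‖u‖ * ‖v‖ + ‖v‖ * ‖u‖ := by
              rw [abs_mul, abs_mul]
              exact add_le_add (mul_le_mul h1 h2 (abs_nonneg _) (norm_nonneg _))
                (mul_le_mul h3 h4 (abs_nonneg _) (norm_nonneg _))
          _ = 2 * (‖u‖ * ‖v‖) := by ring
    _ = (2*n) * (‖u‖ * ‖v‖) := by simp [Finset.sum_const]; ring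

lemma omegaF_self (u : E n) : omegaF n u u = 0 := by
  unfold omegaF; apply Finset.sum_eq_zero; intro i _; ring

lemma omegaF_sub_left (u u' v : E n) : omegaF n (u - u') v = omegaF n u v - omegaF n u' v := by
  unfold omegaF; rw [← Finset.sum_sub_distrib]; apply Finset.sum_congr rfl; intro i _
  simp [PiLp.sub_apply]; ring

lemma omegaF_sub_right (u v v' : E n) : omegaF n u (v - v') = omegaF n u v - omegaF n u v' := by
  unfold omegaF; rw [← Finset.sum_sub_distrib]; apply Finset.sum_congr rfl; intro i _
  simp [PiLp.sub_apply]; ring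



variable {n : ℕ}

/-- `ℕ`-indexed discrete symplectic sum. -/
def SN (n : ℕ) (γ : ℝ → E n) (k : ℕ) (u : ℕ → ℝ) : ℝ :=
  (1/2) * ∑ i ∈ Finset.range k, omegaF n (γ (u i)) (γ (u (i+1)))

lemma SN_congr {γ : ℝ → E n} {k : ℕ} {u u' : ℕ → ℝ} (h : ∀ j ≤ k, u j = u' j) :
    SN n γ k u = SN n γ k u' := by
  unfold SN
  congr 1
  apply Finset.sum_congr rfl
  intro i hi
  rw [Finset.mem_range] at hi
  rw [h i (by omega), h (i+1) (by omega)]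

/-- extension of a `Fin`-indexed partition to `ℕ`. -/
def ext {k : ℕ} (t : Fin (k+1) → ℝ) : ℕ → ℝ := fun j => t ⟨min j k, by omega⟩

lemma SHat_eq_SN (γ : ℝ → E n) (k : ℕ) (t : Fin (k+1) → ℝ) :
    SHat n γ k t = SN n γ k (ext t) := by
  unfold SHat SN
  congr 1
  rw [← Fin.sum_univ_eq_sum_range (fun j => omegaF n (γ (ext t j)) (γ (ext t (j+1)))) k]
  apply Finset.sum_congr rfl
  intro i _
  have hi := i.isLt
  have h1 : ext t (i:ℕ) = t i.castSucc := by
    unfold ext; apply congr_arg; apply Fin.ext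
    simp only [Fin.coe_castSucc]; omega
  have h2 : ext t ((i:ℕ)+1) = t i.succ := by
    unfold ext; apply congr_arg; apply Fin.ext
    simp only [Fin.val_succ]; omega
  rw [h1, h2]

lemma ext_monotone {k : ℕ} {t : Fin (k+1) → ℝ} (ht : Monotone t) : Monotone (ext t) := by
  intro i j hij
  exact ht (by simp [Fin.le_def]; omega)

lemma strictMono_of_lt_succ {k : ℕ} {t : Fin (k+1) → ℝ}
    (h : ∀ i : Fin k, t i.castSucc < t i.succ) : StrictMono t := by
  exact Fin.strictMono_iff_lt_succ.2 h

lemma ext_mem_Icc {k : ℕ} {t : Fin (k+1) → ℝ} (ht : Monotone t) {a b : ℝ}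
    (h0 : t 0 = a) (hl : t (Fin.last k) = b) (j : ℕ) : ext t j ∈ Icc a b := by
  constructor
  · rw [← h0]; exact ht (Fin.zero_le _)
  · rw [← hl]; exact ht (Fin.le_last _)

lemma tele (g : ℕ → ℝ) {p q : ℕ} (h : p ≤ q) :
    ∑ j ∈ Finset.Ico p q, (g (j+1) - g j) = g q - g p := by
  rw [Finset.sum_Ico_eq_sub _ h, Finset.sum_range_sub, Finset.sum_range_sub]
  ring

lemma sum_blocks {M : Type*} [AddCommMonoid M] (F : ℕ → M) {φ : ℕ → ℕ} (hφ : Monotone φ)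
    (k : ℕ) : ∑ i ∈ Finset.range k, ∑ j ∈ Finset.Ico (φ i) (φ (i+1)), F j
      = ∑ j ∈ Finset.Ico (φ 0) (φ k), F j := by
  induction k with
  | zero => simp
  | succ k ih =>
      rw [Finset.sum_range_succ, ih,
        Finset.sum_Ico_consecutive _ (hφ (Nat.zero_le k)) (hφ (Nat.le_succ k))]

/-- variation sum bound -/
lemma sum_dist_le (γ : ℝ → E n) {a b : ℝ} {s : ℕ → ℝ} (hs : Monotone s)
    (hmem : ∀ j, s j ∈ Icc a b) (hfin : eVariationOn γ (Icc a b) ≠ ⊤) (m : ℕ) :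
    ∑ j ∈ Finset.range m, ‖γ (s (j+1)) - γ (s j)‖ ≤ (eVariationOn γ (Icc a b)).toReal := by
  have h1 : ∀ j, ‖γ (s (j+1)) - γ (s j)‖ = (edist (γ (s (j+1))) (γ (s j))).toReal := by
    intro j; rw [edist_dist, dist_eq_norm, ENNReal.toReal_ofReal (norm_nonneg _)]
  calc ∑ j ∈ Finset.range m, ‖γ (s (j+1)) - γ (s j)‖
      = (∑ j ∈ Finset.range m, edist (γ (s (j+1))) (γ (s j))).toReal := by
        rw [ENNReal.toReal_sum (fun j _ => edist_ne_top _ _)]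
        exact Finset.sum_congr rfl fun j _ => h1 j
    _ ≤ (eVariationOn γ (Icc a b)).toReal := by
        apply ENNReal.toReal_mono hfin
        exact eVariationOn.sum_le (f := γ) (n := m) hs hmem

/-- The refinement estimate. -/
lemma refine_est (γ : ℝ → E n) {a b : ℝ} {s : ℕ → ℝ} (hs : Monotone s)
    (hmem : ∀ j, s j ∈ Icc a b) (hfin : eVariationOn γ (Icc a b) ≠ ⊤)
    {k m : ℕ} {φ : ℕ → ℕ} (hφ : Monotone φ) (hφ0 : φ 0 = 0) (hφk : φ k = m) {ε : ℝ} (hε : 0 ≤ ε)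
    (hclose : ∀ i, i < k → ∀ j, φ i ≤ j → j < φ (i+1) → ‖γ (s j) - γ (s (φ i))‖ ≤ ε) :
    |SN n γ m s - SN n γ k (s ∘ φ)|
      ≤ (n : ℝ) * ε * (eVariationOn γ (Icc a b)).toReal := by
  set V := (eVariationOn γ (Icc a b)).toReal with hV
  have key : SN n γ m s - SN n γ k (s ∘ φ)
      = (1/2) * ∑ i ∈ Finset.range k, ∑ j ∈ Finset.Ico (φ i) (φ (i+1)),
          omegaF n (γ (s j) - γ (s (φ i))) (γ (s (j+1)) - γ (s j)) := by
    unfold SN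
    rw [← mul_sub]
    congr 1
    have hsplit : ∑ j ∈ Finset.range m, omegaF n (γ (s j)) (γ (s (j+1)))
        = ∑ i ∈ Finset.range k, ∑ j ∈ Finset.Ico (φ i) (φ (i+1)),
            omegaF n (γ (s j)) (γ (s (j+1))) := by
      rw [sum_blocks _ hφ, hφ0, hφk, Finset.range_eq_Ico]
    rw [hsplit, ← Finset.sum_sub_distrib]
    apply Finset.sum_congr rfl
    intro i _
    have hle : φ i ≤ φ (i+1) := hφ (Nat.le_succ i)
    have hblock : ∀ j, omegaF n (γ (s j) - γ (s (φ i))) (γ (s (j+1)) - γ (s j))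
        = omegaF n (γ (s j)) (γ (s (j+1)))
          - (omegaF n (γ (s (φ i))) (γ (s (j+1))) - omegaF n (γ (s (φ i))) (γ (s j))) := by
      intro j
      rw [omegaF_sub_left, omegaF_sub_right, omegaF_sub_right]
      have := omegaF_self (n := n) (γ (s j))
      ring_nf
      rw [omegaF_self]
      ring
    calc ∑ j ∈ Finset.Ico (φ i) (φ (i+1)), omegaF n (γ (s j)) (γ (s (j+1)))
          - omegaF n (γ ((s ∘ φ) i)) (γ ((s ∘ φ) (i+1)))
        = ∑ j ∈ Finset.Ico (φ i) (φ (i+1)), omegaF n (γ (s j)) (γ (s (j+1)))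
          - ∑ j ∈ Finset.Ico (φ i) (φ (i+1)),
              (omegaF n (γ (s (φ i))) (γ (s (j+1))) - omegaF n (γ (s (φ i))) (γ (s j))) := by
          rw [tele (fun j => omegaF n (γ (s (φ i))) (γ (s j))) hle]
          simp only [Function.comp_apply]
          rw [omegaF_self]
          ring
      _ = ∑ j ∈ Finset.Ico (φ i) (φ (i+1)),
            omegaF n (γ (s j) - γ (s (φ i))) (γ (s (j+1)) - γ (s j)) := by
          rw [← Finset.sum_sub_distrib]
          exact (Finset.sum_congr rfl fun j _ => (hblock j).symm)
  rw [key]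
  rw [abs_mul]
  have habs : |(1:ℝ)/2| = 1/2 := by norm_num
  rw [habs]
  have hbound : |∑ i ∈ Finset.range k, ∑ j ∈ Finset.Ico (φ i) (φ (i+1)),
      omegaF n (γ (s j) - γ (s (φ i))) (γ (s (j+1)) - γ (s j))|
      ≤ (2*n) * ε * V := by
    calc |∑ i ∈ Finset.range k, ∑ j ∈ Finset.Ico (φ i) (φ (i+1)),
        omegaF n (γ (s j) - γ (s (φ i))) (γ (s (j+1)) - γ (s j))|
        ≤ ∑ i ∈ Finset.range k, ∑ j ∈ Finset.Ico (φ i) (φ (i+1)),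
            (2*(n:ℝ)) * ε * ‖γ (s (j+1)) - γ (s j)‖ := by
          refine (Finset.abs_sum_le_sum_abs _ _).trans ?_
          apply Finset.sum_le_sum
          intro i hi
          rw [Finset.mem_range] at hi
          refine (Finset.abs_sum_le_sum_abs _ _).trans ?_
          apply Finset.sum_le_sum
          intro j hj
          rw [Finset.mem_Ico] at hj
          refine (omegaF_bound _ _).trans ?_
          rw [show (2*(n:ℝ)) * ε * ‖γ (s (j+1)) - γ (s j)‖
            = (2*(n:ℝ)) * (ε * ‖γ (s (j+1)) - γ (s j)‖) by ring]
          apply mul_le_mul_of_nonneg_left _ (by positivity)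
          exact mul_le_mul_of_nonneg_right (hclose i hi j hj.1 hj.2) (norm_nonneg _)
      _ = (2*(n:ℝ)) * ε * ∑ j ∈ Finset.Ico (φ 0) (φ k), ‖γ (s (j+1)) - γ (s j)‖ := by
          rw [← sum_blocks (fun j => ‖γ (s (j+1)) - γ (s j)‖) hφ k, Finset.mul_sum]
          exact Finset.sum_congr rfl fun i _ => (Finset.mul_sum _ _ _).symm
      _ ≤ (2*n) * ε * V := by
          rw [hφ0, hφk, show Finset.Ico 0 m = Finset.range m by rw [← Finset.range_eq_Ico]]
          have hsum := sum_dist_le γ hs hmem hfin m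
          exact mul_le_mul_of_nonneg_left hsum (by positivity)
  calc (1:ℝ)/2 * |∑ i ∈ Finset.range k, ∑ j ∈ Finset.Ico (φ i) (φ (i+1)),
        omegaF n (γ (s j) - γ (s (φ i))) (γ (s (j+1)) - γ (s j))|
      ≤ 1/2 * ((2*n) * ε * V) := by linarith
    _ = (n:ℝ) * ε * V := by ring
/-- sorted enumeration of a finset, capped. -/
def sfun (R : Finset ℝ) {m : ℕ} (h : R.card = m+1) : ℕ → ℝ :=
  fun j => (R.orderIsoOfFin h ⟨min j m, by omega⟩ : ℝ)

lemma sfun_mono (R : Finset ℝ) {m : ℕ} (h : R.card = m+1) : Monotone (sfun R h) := by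
  intro i j hij
  unfold sfun
  have : (⟨min i m, by omega⟩ : Fin (m+1)) ≤ ⟨min j m, by omega⟩ := by
    simp only [Fin.le_def]; omega
  exact_mod_cast (R.orderIsoOfFin h).monotone this

lemma sfun_mem (R : Finset ℝ) {m : ℕ} (h : R.card = m+1) (j : ℕ) : sfun R h j ∈ R :=
  (R.orderIsoOfFin h _).2

/-- Embed a monotone partition into the sorted enumeration of a finset containing
its range, whose min and max are the endpoints of the partition. -/
lemma embed_into (R : Finset ℝ) {m : ℕ} (h : R.card = m+1) {k : ℕ} (t : Fin (k+1) → ℝ)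
    (hmono : Monotone t) (hsub : ∀ i, t i ∈ R)
    (hmin : ∀ r ∈ R, t 0 ≤ r) (hmax : ∀ r ∈ R, r ≤ t (Fin.last k)) :
    ∃ φ : ℕ → ℕ, Monotone φ ∧ φ 0 = 0 ∧ φ k = m ∧
      ∀ i : ℕ, sfun R h (φ i) = ext t i := by
  set e := R.orderIsoOfFin h with he
  refine ⟨fun i => (e.symm ⟨t ⟨min i k, by omega⟩, hsub _⟩ : Fin (m+1)).1, ?_, ?_, ?_, ?_⟩
  · intro i j hij
    have h1 : t ⟨min i k, by omega⟩ ≤ t ⟨min j k, by omega⟩ := by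
      apply hmono; simp only [Fin.le_def]; omega
    exact e.symm.monotone (Subtype.mk_le_mk.2 h1)
  · have : (e.symm ⟨t ⟨min 0 k, by omega⟩, hsub _⟩ : Fin (m+1)) ≤
        e.symm ⟨t ⟨min 0 k, by omega⟩, hsub _⟩ := le_refl _
    have hzero : ∀ j : Fin (m+1), (e.symm ⟨t ⟨min 0 k, by omega⟩, hsub _⟩ : Fin (m+1)) ≤ j := by
      intro j
      rw [← e.symm_apply_apply j]
      apply e.symm.monotone
      exact Subtype.mk_le_mk.2 ((show t ⟨min 0 k, by omega⟩ = t 0 from congrArg t (Fin.ext (by simp))).le.trans (hmin _ (e j).2))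
    exact Nat.le_zero.1 (hzero 0)
  · have hlast : ∀ j : Fin (m+1), j ≤ (e.symm ⟨t ⟨min k k, by omega⟩, hsub _⟩ : Fin (m+1)) := by
      intro j
      rw [← e.symm_apply_apply j]
      apply e.symm.monotone
      refine Subtype.mk_le_mk.2 ?_
      have : t ⟨min k k, by omega⟩ = t (Fin.last k) := by congr 1; apply Fin.ext; simp
      rw [this]
      exact hmax _ (e j).2
    have h1 := hlast (Fin.last m)
    have h2 := Fin.le_last (e.symm ⟨t ⟨min k k, by omega⟩, hsub _⟩)
    have := le_antisymm h2 h1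
    simpa [Fin.ext_iff] using congrArg Fin.val this
  · intro i
    unfold sfun
    have hle : ((e.symm ⟨t ⟨min i k, by omega⟩, hsub _⟩ : Fin (m+1)) : ℕ) ≤ m :=
      Nat.lt_succ_iff.1 (Fin.is_lt _)
    have : (⟨min ((e.symm ⟨t ⟨min i k, by omega⟩, hsub _⟩ : Fin (m+1)) : ℕ) m, by omega⟩ :
        Fin (m+1)) = e.symm ⟨t ⟨min i k, by omega⟩, hsub _⟩ := by
      apply Fin.ext; simp only []; omega
    rw [this, he]
    show ((R.orderIsoOfFin h) ((R.orderIsoOfFin h).symm _) : ℝ) = ext t i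
    rw [OrderIso.apply_symm_apply]
    rfl
lemma unif_mod {γ : ℝ → E n} {a b : ℝ} (hcont : ContinuousOn γ (Icc a b)) {ε : ℝ}
    (hε : 0 < ε) :
    ∃ δ > (0:ℝ), ∀ x ∈ Icc a b, ∀ y ∈ Icc a b, |x - y| < δ → ‖γ x - γ y‖ ≤ ε := by
  have hu : UniformContinuousOn γ (Icc a b) :=
    isCompact_Icc.uniformContinuousOn_of_continuous hcont
  rw [Metric.uniformContinuousOn_iff] at hu
  obtain ⟨δ, hδ, hd⟩ := hu ε hε
  refine ⟨δ, hδ, fun x hx y hy hxy => ?_⟩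
  have := hd x hx y hy (by rwa [Real.dist_eq])
  rw [dist_eq_norm] at this
  exact this.le

lemma part_vs_finset {γ : ℝ → E n} {a b : ℝ}
    (hfin : eVariationOn γ (Icc a b) ≠ ⊤) {ε δ : ℝ} (hε : 0 ≤ ε)
    (hmod : ∀ x ∈ Icc a b, ∀ y ∈ Icc a b, |x - y| < δ → ‖γ x - γ y‖ ≤ ε)
    {k : ℕ} (t : Fin (k+1) → ℝ) (hcv : ∀ i : Fin k, t i.castSucc < t i.succ)
    (hmesh : ∀ i : Fin k, t i.succ - t i.castSucc < δ)
    (R : Finset ℝ) {m : ℕ} (h : R.card = m+1) (hsub : ∀ i, t i ∈ R)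
    (hRmem : ∀ r ∈ R, r ∈ Icc a b)
    (hmin : ∀ r ∈ R, t 0 ≤ r) (hmax : ∀ r ∈ R, r ≤ t (Fin.last k)) :
    |SN n γ m (sfun R h) - SHat n γ k t|
      ≤ (n:ℝ) * ε * (eVariationOn γ (Icc a b)).toReal := by
  have ht : StrictMono t := strictMono_of_lt_succ hcv
  obtain ⟨φ, hφm, hφ0, hφk, hφ⟩ := embed_into R h t ht.monotone hsub hmin hmax
  have hext : sfun R h ∘ φ = ext t := funext hφ
  have hsn : SHat n γ k t = SN n γ k (sfun R h ∘ φ) := by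
    rw [SHat_eq_SN, hext]
  rw [hsn]
  apply refine_est γ (sfun_mono R h) (fun j => hRmem _ (sfun_mem R h j)) hfin hφm hφ0 hφk hε
  intro i hik j hj1 hj2
  set s := sfun R h with hs
  have hsmem : ∀ j, s j ∈ Icc a b := fun j => hRmem _ (sfun_mem R h j)
  have e1 : s (φ i) = t ⟨i, by omega⟩ := by
    rw [hφ i]; unfold ext; congr 1; apply Fin.ext; simp only []; omega
  have e2 : s (φ (i+1)) = t ⟨i+1, by omega⟩ := by
    rw [hφ (i+1)]; unfold ext; congr 1; apply Fin.ext; simp only []; omega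
  have hm1 : s (φ i) ≤ s j := sfun_mono R h hj1
  have hm2 : s j ≤ s (φ (i+1)) := sfun_mono R h (le_of_lt hj2)
  have hme : t (⟨i, by omega⟩ : Fin (k+1)) = t (⟨i, hik⟩ : Fin k).castSucc := by
    congr 1
  have hme2 : t (⟨i+1, by omega⟩ : Fin (k+1)) = t (⟨i, hik⟩ : Fin k).succ := by
    congr 1
  have hlt : |s j - s (φ i)| < δ := by
    rw [abs_of_nonneg (by linarith)]
    have := hmesh ⟨i, hik⟩
    rw [← hme, ← hme2] at this
    rw [e1, e2] at *
    linarith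
  exact hmod _ (hsmem j) _ (hsmem (φ i)) hlt
/-- Any two fine partitions give close discrete symplectic sums. -/
lemma partitions_close {γ : ℝ → E n} {a b : ℝ}
    (hfin : eVariationOn γ (Icc a b) ≠ ⊤) {ε δ : ℝ} (hε : 0 ≤ ε)
    (hmod : ∀ x ∈ Icc a b, ∀ y ∈ Icc a b, |x - y| < δ → ‖γ x - γ y‖ ≤ ε)
    {k : ℕ} (t : Fin (k+1) → ℝ) (h0 : t 0 = a) (hl : t (Fin.last k) = b)
    (hcv : ∀ i : Fin k, t i.castSucc < t i.succ)
    (hmesh : ∀ i : Fin k, t i.succ - t i.castSucc < δ)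
    {k' : ℕ} (t' : Fin (k'+1) → ℝ) (h0' : t' 0 = a) (hl' : t' (Fin.last k') = b)
    (hcv' : ∀ i : Fin k', t' i.castSucc < t' i.succ)
    (hmesh' : ∀ i : Fin k', t' i.succ - t' i.castSucc < δ) :
    |SHat n γ k t - SHat n γ k' t'|
      ≤ 2 * (n:ℝ) * ε * (eVariationOn γ (Icc a b)).toReal := by
  classical
  set R : Finset ℝ := (Finset.image t Finset.univ) ∪ (Finset.image t' Finset.univ) with hR
  have hne : R.Nonempty := ⟨t 0, by
    simp [hR]⟩
  have hcard : R.card = (R.card - 1) + 1 := by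
    have := Finset.card_pos.2 hne; omega
  set m := R.card - 1
  have hmem_t : ∀ i, t i ∈ R := fun i => by
    simp only [hR, Finset.mem_union, Finset.mem_image]
    exact Or.inl ⟨i, Finset.mem_univ i, rfl⟩
  have hmem_t' : ∀ i, t' i ∈ R := fun i => by
    simp only [hR, Finset.mem_union, Finset.mem_image]
    exact Or.inr ⟨i, Finset.mem_univ i, rfl⟩
  have ht := strictMono_of_lt_succ hcv
  have ht' := strictMono_of_lt_succ hcv'
  have hRIcc : ∀ r ∈ R, r ∈ Icc a b := by
    intro r hr
    simp only [hR, Finset.mem_union, Finset.mem_image] at hr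
    rcases hr with ⟨i, _, rfl⟩ | ⟨i, _, rfl⟩
    · exact ⟨h0 ▸ ht.monotone (Fin.zero_le i), hl ▸ ht.monotone (Fin.le_last i)⟩
    · exact ⟨h0' ▸ ht'.monotone (Fin.zero_le i), hl' ▸ ht'.monotone (Fin.le_last i)⟩
  have hmin : ∀ r ∈ R, a ≤ r := fun r hr => (hRIcc r hr).1
  have hmax : ∀ r ∈ R, r ≤ b := fun r hr => (hRIcc r hr).2
  have h1 := part_vs_finset (n := n) hfin hε hmod t hcv hmesh R hcard hmem_t hRIcc
    (fun r hr => h0 ▸ hmin r hr) (fun r hr => hl ▸ hmax r hr)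
  have h2 := part_vs_finset (n := n) hfin hε hmod t' hcv' hmesh' R hcard hmem_t' hRIcc
    (fun r hr => h0' ▸ hmin r hr) (fun r hr => hl' ▸ hmax r hr)
  calc |SHat n γ k t - SHat n γ k' t'|
      ≤ |SN n γ m (sfun R hcard) - SHat n γ k t|
        + |SN n γ m (sfun R hcard) - SHat n γ k' t'| := by
        rw [abs_sub_comm (SN n γ m (sfun R hcard)) (SHat n γ k t)]
        exact abs_sub_le _ _ _ |>.trans (le_of_eq rfl)
    _ ≤ 2 * (n:ℝ) * ε * (eVariationOn γ (Icc a b)).toReal := by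
        have := add_le_add h1 h2; linarith

/-- the uniform partition of `[a,b]` with `N+1` pieces. -/
def tU (a b : ℝ) (N : ℕ) : Fin (N+1+1) → ℝ := fun i => a + i * ((b - a) / (N+1))

lemma tU_spec (a b : ℝ) (hab : a < b) (N : ℕ) :
    tU a b N 0 = a ∧ tU a b N (Fin.last (N+1)) = b ∧
    (∀ i : Fin (N+1), tU a b N i.castSucc < tU a b N i.succ) ∧
    (∀ i : Fin (N+1), tU a b N i.succ - tU a b N i.castSucc = (b-a)/(N+1)) := by
  have hpos : (0:ℝ) < (N:ℝ) + 1 := by positivity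
  refine ⟨by simp [tU], ?_, ?_, ?_⟩
  · simp only [tU, Fin.val_last]
    field_simp
    push_cast; ring
  · intro i
    simp only [tU, Fin.coe_castSucc, Fin.val_succ]
    push_cast
    have : (0:ℝ) < (b-a)/(N+1) := div_pos (by linarith) (by positivity)
    nlinarith
  · intro i
    simp only [tU, Fin.coe_castSucc, Fin.val_succ]
    push_cast
    ring

/-- Existence of the symplectic area for a continuous curve of finite variation. -/
lemma exists_area {γ : ℝ → E n} {a b : ℝ} (hab : a < b)
    (hcont : ContinuousOn γ (Icc a b)) (hfin : eVariationOn γ (Icc a b) ≠ ⊤) :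
    ∃ S : ℝ, ∀ ε > (0 : ℝ), ∃ δ > (0 : ℝ), ∀ (k : ℕ) (t : Fin (k + 1) → ℝ),
      t 0 = a → t (Fin.last k) = b →
      (∀ i : Fin k, t i.castSucc < t i.succ) →
      (∀ i : Fin k, t i.succ - t i.castSucc < δ) →
      |SHat n γ k t - S| < ε := by
  set V := (eVariationOn γ (Icc a b)).toReal with hV
  have hV0 : 0 ≤ V := ENNReal.toReal_nonneg
  -- the modulus
  have key : ∀ ε > (0:ℝ), ∃ δ > (0:ℝ), ∀ (k : ℕ) (t : Fin (k + 1) → ℝ),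
      t 0 = a → t (Fin.last k) = b →
      (∀ i : Fin k, t i.castSucc < t i.succ) →
      (∀ i : Fin k, t i.succ - t i.castSucc < δ) →
      ∀ (k' : ℕ) (t' : Fin (k' + 1) → ℝ),
      t' 0 = a → t' (Fin.last k') = b →
      (∀ i : Fin k', t' i.castSucc < t' i.succ) →
      (∀ i : Fin k', t' i.succ - t' i.castSucc < δ) →
      |SHat n γ k t - SHat n γ k' t'| ≤ ε := by
    intro ε hε
    have hnV : (0:ℝ) ≤ (n:ℝ) * V := mul_nonneg (Nat.cast_nonneg n) hV0
    set ε₀ := ε / (2 * (n * V + 1)) with hε₀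
    have hε₀pos : 0 < ε₀ := div_pos hε (by linarith)
    obtain ⟨δ, hδ, hmod⟩ := unif_mod hcont hε₀pos
    refine ⟨δ, hδ, fun k t h0 hl hcv hmesh k' t' h0' hl' hcv' hmesh' => ?_⟩
    have := partitions_close hfin hε₀pos.le hmod t h0 hl hcv hmesh t' h0' hl' hcv' hmesh'
    refine this.trans ?_
    rw [← hV]
    calc 2*(n:ℝ)*ε₀*V ≤ 2*(n:ℝ)*ε₀*V + 2*ε₀ := by linarith
      _ = ε₀ * (2*((n:ℝ)*V+1)) := by ring
      _ = ε := by rw [hε₀]; field_simp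
  -- the Cauchy sequence of uniform partitions
  set c : ℕ → ℝ := fun N => SHat n γ (N+1) (tU a b N) with hc
  have hmesh_small : ∀ δ > (0:ℝ), ∃ N₀ : ℕ, ∀ N ≥ N₀, (b - a)/(N+1) < δ := by
    intro δ hδ
    obtain ⟨N₀, hN₀⟩ := exists_nat_gt ((b-a)/δ)
    refine ⟨N₀, fun N hN => ?_⟩
    rw [div_lt_iff₀ (by positivity)]
    have h1 : (b-a)/δ < (N:ℝ)+1 := by
      have : (N₀:ℝ) ≤ N := by exact_mod_cast hN
      linarith
    calc b - a = ((b-a)/δ) * δ := by field_simp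
      _ < ((N:ℝ)+1) * δ := by apply mul_lt_mul_of_pos_right h1 hδ
      _ = δ * ((N:ℝ)+1) := by ring
  have hcauchy : CauchySeq c := by
    rw [Metric.cauchySeq_iff]
    intro ε hε
    obtain ⟨δ, hδ, hkey⟩ := key (ε/2) (by positivity)
    obtain ⟨N₀, hN₀⟩ := hmesh_small δ hδ
    refine ⟨N₀, fun p hp q hq => ?_⟩
    obtain ⟨h0p, hlp, hcvp, hmp⟩ := tU_spec a b hab p
    obtain ⟨h0q, hlq, hcvq, hmq⟩ := tU_spec a b hab q
    have hd : dist (c p) (c q) ≤ ε/2 := by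
      rw [Real.dist_eq]
      exact hkey _ _ h0p hlp hcvp (fun i => (hmp i) ▸ hN₀ p hp) _ _
        h0q hlq hcvq (fun i => (hmq i) ▸ hN₀ q hq)
    linarith
  obtain ⟨S, hS⟩ := cauchySeq_tendsto_of_complete hcauchy
  refine ⟨S, fun ε hε => ?_⟩
  obtain ⟨δ, hδ, hkey⟩ := key (ε/3) (by positivity)
  refine ⟨δ, hδ, fun k t h0 hl hcv hmesh => ?_⟩
  -- pick a fine uniform partition
  obtain ⟨N₀, hN₀⟩ := hmesh_small δ hδ
  have hS' := (Metric.tendsto_atTop.1 hS) (ε/3) (by positivity)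
  obtain ⟨N₁, hN₁⟩ := hS'
  set N := max N₀ N₁
  obtain ⟨h0N, hlN, hcvN, hmN⟩ := tU_spec a b hab N
  have h1 : |SHat n γ k t - c N| ≤ ε/3 :=
    hkey _ _ h0 hl hcv hmesh _ _ h0N hlN hcvN
      (fun i => (hmN i) ▸ hN₀ N (le_max_left _ _))
  have h2 : |c N - S| < ε/3 := by
    rw [← Real.dist_eq]
    exact hN₁ N (le_max_right _ _)
  calc |SHat n γ k t - S| ≤ |SHat n γ k t - c N| + |c N - S| := abs_sub_le _ _ _
    _ < ε := by linarith
lemma ext_zero {k : ℕ} (t : Fin (k+1) → ℝ) : ext t 0 = t 0 := by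
  unfold ext; congr 1

lemma ext_last {k : ℕ} (t : Fin (k+1) → ℝ) : ext t k = t (Fin.last k) := by
  unfold ext; congr 1; apply Fin.ext; simp [Fin.last]

/-- Comparison of discrete symplectic sums of two curves along the same partition. -/
lemma SHat_diff {γ g : ℝ → E n} {a b : ℝ} (hab : a ≤ b)
    (hfinγ : eVariationOn γ (Icc a b) ≠ ⊤) (hfing : eVariationOn g (Icc a b) ≠ ⊤)
    {εe : ℝ} (hde : ∀ x ∈ Icc a b, ‖γ x - g x‖ ≤ εe)
    {k : ℕ} (t : Fin (k+1) → ℝ) (h0 : t 0 = a) (hl : t (Fin.last k) = b)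
    (hcv : ∀ i : Fin k, t i.castSucc < t i.succ) :
    |SHat n γ k t - SHat n g k t| ≤ (n:ℝ) * εe *
      ((eVariationOn γ (Icc a b)).toReal + (eVariationOn g (Icc a b)).toReal
        + ‖g a‖ + ‖g b‖) := by
  have ht := strictMono_of_lt_succ hcv
  set u := ext t with hu
  have hum : Monotone u := ext_monotone ht.monotone
  have humem : ∀ j, u j ∈ Icc a b := ext_mem_Icc ht.monotone h0 hl
  have hu0 : u 0 = a := by rw [hu, ext_zero, h0]
  have huk : u k = b := by rw [hu, ext_last, hl]
  have hεe : 0 ≤ εe := le_trans (norm_nonneg _) (hde a ⟨le_refl a, hab⟩)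
  set A : ℕ → ℝ := fun j => omegaF n (γ (u j) - g (u j)) (γ (u (j+1)) - γ (u j)) with hA
  set B : ℕ → ℝ := fun j => omegaF n (g (u j) - g (u (j+1))) (γ (u (j+1)) - g (u (j+1))) with hB
  set T : ℕ → ℝ := fun j => omegaF n (g (u j)) (γ (u j) - g (u j)) with hT
  have hid : ∀ j, omegaF n (γ (u j)) (γ (u (j+1))) - omegaF n (g (u j)) (g (u (j+1)))
      = A j + B j + (T (j+1) - T j) := by
    intro j
    simp only [hA, hB, hT]
    simp only [omegaF_sub_left, omegaF_sub_right, omegaF_self]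
    ring
  have hD : SHat n γ k t - SHat n g k t
      = (1/2) * ((∑ j ∈ Finset.range k, A j) + (∑ j ∈ Finset.range k, B j)
          + (T k - T 0)) := by
    rw [SHat_eq_SN, SHat_eq_SN]
    unfold SN
    rw [← hu, ← mul_sub, ← Finset.sum_sub_distrib]
    congr 1
    rw [← Finset.sum_range_sub T k, ← Finset.sum_add_distrib, ← Finset.sum_add_distrib]
    exact Finset.sum_congr rfl fun j _ => hid j
  have hVγ := sum_dist_le γ hum humem hfinγ k
  have hVg := sum_dist_le g hum humem hfing k
  have hAbd : |∑ j ∈ Finset.range k, A j|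
      ≤ 2 * (n:ℝ) * εe * (eVariationOn γ (Icc a b)).toReal := by
    refine (Finset.abs_sum_le_sum_abs _ _).trans ?_
    calc ∑ j ∈ Finset.range k, |A j|
        ≤ ∑ j ∈ Finset.range k, 2 * (n:ℝ) * εe * ‖γ (u (j+1)) - γ (u j)‖ := by
          apply Finset.sum_le_sum
          intro j _
          refine (omegaF_bound _ _).trans ?_
          rw [show 2 * (n:ℝ) * εe * ‖γ (u (j+1)) - γ (u j)‖
            = (2*(n:ℝ)) * (εe * ‖γ (u (j+1)) - γ (u j)‖) by ring]
          apply mul_le_mul_of_nonneg_left _ (by positivity)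
          exact mul_le_mul_of_nonneg_right (hde _ (humem j)) (norm_nonneg _)
      _ = 2 * (n:ℝ) * εe * ∑ j ∈ Finset.range k, ‖γ (u (j+1)) - γ (u j)‖ := by
          rw [Finset.mul_sum]
      _ ≤ 2 * (n:ℝ) * εe * (eVariationOn γ (Icc a b)).toReal :=
          mul_le_mul_of_nonneg_left hVγ (by positivity)
  have hBbd : |∑ j ∈ Finset.range k, B j|
      ≤ 2 * (n:ℝ) * εe * (eVariationOn g (Icc a b)).toReal := by
    refine (Finset.abs_sum_le_sum_abs _ _).trans ?_
    calc ∑ j ∈ Finset.range k, |B j|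
        ≤ ∑ j ∈ Finset.range k, 2 * (n:ℝ) * εe * ‖g (u (j+1)) - g (u j)‖ := by
          apply Finset.sum_le_sum
          intro j _
          refine (omegaF_bound _ _).trans ?_
          rw [show 2 * (n:ℝ) * εe * ‖g (u (j+1)) - g (u j)‖
            = (2*(n:ℝ)) * (‖g (u (j+1)) - g (u j)‖ * εe) by ring]
          apply mul_le_mul_of_nonneg_left _ (by positivity)
          have h1 : ‖g (u j) - g (u (j+1))‖ = ‖g (u (j+1)) - g (u j)‖ := norm_sub_rev _ _
          rw [h1]
          exact mul_le_mul_of_nonneg_left (hde _ (humem (j+1))) (norm_nonneg _)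
      _ = 2 * (n:ℝ) * εe * ∑ j ∈ Finset.range k, ‖g (u (j+1)) - g (u j)‖ := by
          rw [Finset.mul_sum]
      _ ≤ 2 * (n:ℝ) * εe * (eVariationOn g (Icc a b)).toReal :=
          mul_le_mul_of_nonneg_left hVg (by positivity)
  have hT0 : |T 0| ≤ 2 * (n:ℝ) * εe * ‖g a‖ := by
    simp only [hT, hu0]
    refine (omegaF_bound _ _).trans ?_
    rw [show 2 * (n:ℝ) * εe * ‖g a‖ = (2*(n:ℝ)) * (‖g a‖ * εe) by ring]
    apply mul_le_mul_of_nonneg_left _ (by positivity)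
    exact mul_le_mul_of_nonneg_left (hde a ⟨le_refl a, hab⟩) (norm_nonneg _)
  have hTk : |T k| ≤ 2 * (n:ℝ) * εe * ‖g b‖ := by
    simp only [hT, huk]
    refine (omegaF_bound _ _).trans ?_
    rw [show 2 * (n:ℝ) * εe * ‖g b‖ = (2*(n:ℝ)) * (‖g b‖ * εe) by ring]
    apply mul_le_mul_of_nonneg_left _ (by positivity)
    exact mul_le_mul_of_nonneg_left (hde b ⟨hab, le_refl b⟩) (norm_nonneg _)
  rw [hD]
  rw [abs_mul, abs_of_nonneg (by norm_num : (0:ℝ) ≤ 1/2)]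
  have htri : |(∑ j ∈ Finset.range k, A j) + (∑ j ∈ Finset.range k, B j) + (T k - T 0)|
      ≤ |∑ j ∈ Finset.range k, A j| + |∑ j ∈ Finset.range k, B j| + |T k| + |T 0| := by
    calc |(∑ j ∈ Finset.range k, A j) + (∑ j ∈ Finset.range k, B j) + (T k - T 0)|
        ≤ |(∑ j ∈ Finset.range k, A j) + (∑ j ∈ Finset.range k, B j)| + |T k - T 0| :=
          abs_add_le _ _
      _ ≤ |∑ j ∈ Finset.range k, A j| + |∑ j ∈ Finset.range k, B j| + (|T k| + |T 0|) :=
          add_le_add (abs_add_le _ _) (abs_sub _ _)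
      _ = _ := by ring
  calc (1:ℝ)/2 * |(∑ j ∈ Finset.range k, A j) + (∑ j ∈ Finset.range k, B j) + (T k - T 0)|
      ≤ 1/2 * (|∑ j ∈ Finset.range k, A j| + |∑ j ∈ Finset.range k, B j| + |T k| + |T 0|) := by
        linarith
    _ ≤ 1/2 * (2 * (n:ℝ) * εe * (eVariationOn γ (Icc a b)).toReal
          + 2 * (n:ℝ) * εe * (eVariationOn g (Icc a b)).toReal
          + 2 * (n:ℝ) * εe * ‖g b‖ + 2 * (n:ℝ) * εe * ‖g a‖) := by linarith
    _ = (n:ℝ) * εe * ((eVariationOn γ (Icc a b)).toReal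
          + (eVariationOn g (Icc a b)).toReal + ‖g a‖ + ‖g b‖) := by ring
lemma mesh_small {a b : ℝ} (hab : a < b) {δ : ℝ} (hδ : 0 < δ) :
    ∃ N : ℕ, (b - a)/(N+1) < δ := by
  obtain ⟨N, hN⟩ := exists_nat_gt ((b-a)/δ)
  refine ⟨N, ?_⟩
  rw [div_lt_iff₀ (by positivity)]
  calc b - a = ((b-a)/δ) * δ := by field_simp
    _ < ((N:ℝ)+1) * δ := by
        apply mul_lt_mul_of_pos_right _ hδ
        linarith
    _ = δ * ((N:ℝ)+1) := by ring

set_option linter.unusedVariables false in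
lemma area_dist {γ g : ℝ → E n} {a b : ℝ} (hab : a < b) {S S' B : ℝ}
    (hS : IsSympArea n a b γ S) (hS' : IsSympArea n a b g S')
    (hB : ∀ (k : ℕ) (t : Fin (k+1) → ℝ), t 0 = a → t (Fin.last k) = b →
      (∀ i : Fin k, t i.castSucc < t i.succ) → |SHat n γ k t - SHat n g k t| ≤ B) :
    |S - S'| ≤ B := by
  apply le_of_forall_pos_le_add
  intro η hη
  obtain ⟨δ, hδ, h1⟩ := hS (η/2) (by positivity)
  obtain ⟨δ', hδ', h2⟩ := hS' (η/2) (by positivity)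
  obtain ⟨N, hN⟩ := mesh_small hab (lt_min hδ hδ')
  obtain ⟨h0N, hlN, hcvN, hmN⟩ := tU_spec a b hab N
  have hmδ : ∀ i : Fin (N+1), tU a b N i.succ - tU a b N i.castSucc < δ :=
    fun i => (hmN i) ▸ (hN.trans_le (min_le_left _ _))
  have hmδ' : ∀ i : Fin (N+1), tU a b N i.succ - tU a b N i.castSucc < δ' :=
    fun i => (hmN i) ▸ (hN.trans_le (min_le_right _ _))
  have e1 := h1 _ _ h0N hlN hcvN hmδ
  have e2 := h2 _ _ h0N hlN hcvN hmδ'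
  have e3 := hB _ _ h0N hlN hcvN
  calc |S - S'| ≤ |SHat n γ (N+1) (tU a b N) - S|
        + |SHat n γ (N+1) (tU a b N) - SHat n g (N+1) (tU a b N)|
        + |SHat n g (N+1) (tU a b N) - S'| := by
        have := abs_sub_le S (SHat n γ (N+1) (tU a b N)) S'
        have h4 := abs_sub_le (SHat n γ (N+1) (tU a b N)) (SHat n g (N+1) (tU a b N)) S'
        rw [abs_sub_comm S (SHat n γ (N+1) (tU a b N))] at this
        linarith
    _ ≤ B + η := by linarith

end SA


/-- **Continuity of the symplectic area under uniform convergence with bounded lengths**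
(Lemma 2.12(4)).  If `γᵢ → γ` uniformly on `[a,b]`, all the curves are continuous with
finite length, and `sup_i ℓ(γᵢ) < ∞`, then all the symplectic areas exist and
`S(γᵢ) → S(γ)`. -/
theorem symp_area_uniform_limit (n : ℕ) (hn : 1 ≤ n) (a b : ℝ) (hab : a < b)
    (γ : ℝ → E n) (γs : ℕ → ℝ → E n)
    (hcont : ContinuousOn γ (Icc a b))
    (hconts : ∀ i, ContinuousOn (γs i) (Icc a b))
    (hlen : eVariationOn γ (Icc a b) ≠ ⊤)
    (hunif : TendstoUniformlyOn γs γ atTop (Icc a b))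
    (C : ℝ≥0∞) (hC : C ≠ ⊤) (hlens : ∀ i, eVariationOn (γs i) (Icc a b) ≤ C) :
    ∃ (S : ℝ) (Si : ℕ → ℝ),
      IsSympArea n a b γ S ∧
      (∀ i, IsSympArea n a b (γs i) (Si i)) ∧
      Tendsto Si atTop (𝓝 S) := by
  have hfins : ∀ i, eVariationOn (γs i) (Icc a b) ≠ ⊤ :=
    fun i => ne_top_of_le_ne_top hC (hlens i)
  obtain ⟨S, hS⟩ := SA.exists_area hab hcont hlen
  have hS : IsSympArea n a b γ S := hS
  have hSi' : ∀ i, ∃ Si, IsSympArea n a b (γs i) Si := fun i => SA.exists_area hab (hconts i) (hfins i)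
  choose Si hSi using hSi'
  refine ⟨S, Si, hS, hSi, ?_⟩
  rw [Metric.tendsto_atTop]
  intro ε hε
  set V := (eVariationOn γ (Icc a b)).toReal with hV
  have hV0 : 0 ≤ V := ENNReal.toReal_nonneg
  set M := V + C.toReal + (‖γ a‖ + 1) + (‖γ b‖ + 1) with hM
  have hM0 : 0 ≤ M := by
    have := ENNReal.toReal_nonneg (a := C)
    have := norm_nonneg (γ a); have := norm_nonneg (γ b)
    simp only [hM]; linarith
  set K := (n:ℝ) * M + 1 with hK
  have hnM : (0:ℝ) ≤ (n:ℝ) * M := mul_nonneg (Nat.cast_nonneg n) hM0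
  have hKpos : 0 < K := by simp only [hK]; linarith
  set ε₀ := min 1 (ε / (2*K)) with hε₀
  have hε₀pos : 0 < ε₀ := lt_min one_pos (by positivity)
  have hev := (Metric.tendstoUniformlyOn_iff.1 hunif) ε₀ hε₀pos
  rw [eventually_atTop] at hev
  obtain ⟨N, hN⟩ := hev
  refine ⟨N, fun i hi => ?_⟩
  have hde : ∀ x ∈ Icc a b, ‖γ x - γs i x‖ ≤ ε₀ := by
    intro x hx
    have := hN i hi x hx
    rw [dist_eq_norm] at this
    exact this.le
  have hBpart : ∀ (k : ℕ) (t : Fin (k+1) → ℝ), t 0 = a → t (Fin.last k) = b →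
      (∀ j : Fin k, t j.castSucc < t j.succ) →
      |SHat n γ k t - SHat n (γs i) k t| ≤ (n:ℝ) * ε₀ *
        (V + (eVariationOn (γs i) (Icc a b)).toReal + ‖γs i a‖ + ‖γs i b‖) :=
    fun k t h0 hl hcv => SA.SHat_diff hab.le hlen (hfins i) hde t h0 hl hcv
  have hdist : |S - Si i| ≤ (n:ℝ) * ε₀ *
      (V + (eVariationOn (γs i) (Icc a b)).toReal + ‖γs i a‖ + ‖γs i b‖) :=
    SA.area_dist hab hS (hSi i) hBpart
  -- now bound the RHS
  have hVi : (eVariationOn (γs i) (Icc a b)).toReal ≤ C.toReal :=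
    ENNReal.toReal_mono hC (hlens i)
  have hga : ‖γs i a‖ ≤ ‖γ a‖ + 1 := by
    have h1 := norm_sub_norm_le (γs i a) (γ a)
    have h2 : ‖γs i a - γ a‖ = ‖γ a - γs i a‖ := norm_sub_rev _ _
    have h3 := hde a ⟨le_refl a, hab.le⟩
    have h4 : ε₀ ≤ 1 := min_le_left _ _
    linarith
  have hgb : ‖γs i b‖ ≤ ‖γ b‖ + 1 := by
    have h1 := norm_sub_norm_le (γs i b) (γ b)
    have h2 : ‖γs i b - γ b‖ = ‖γ b - γs i b‖ := norm_sub_rev _ _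
    have h3 := hde b ⟨hab.le, le_refl b⟩
    have h4 : ε₀ ≤ 1 := min_le_left _ _
    linarith
  have hfac : V + (eVariationOn (γs i) (Icc a b)).toReal + ‖γs i a‖ + ‖γs i b‖ ≤ M := by
    simp only [hM]; linarith
  have hbd : (n:ℝ) * ε₀ *
      (V + (eVariationOn (γs i) (Icc a b)).toReal + ‖γs i a‖ + ‖γs i b‖) ≤ ε/2 := by
    have h5 : (n:ℝ) * ε₀ * (V + (eVariationOn (γs i) (Icc a b)).toReal
        + ‖γs i a‖ + ‖γs i b‖) ≤ (n:ℝ) * ε₀ * M :=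
      mul_le_mul_of_nonneg_left hfac (by positivity)
    have h6 : (n:ℝ) * ε₀ * M ≤ ε₀ * K := by
      rw [show (n:ℝ) * ε₀ * M = ε₀ * ((n:ℝ)*M) by ring]
      exact mul_le_mul_of_nonneg_left (by simp only [hK]; linarith) hε₀pos.le
    have h7 : ε₀ * K ≤ (ε/(2*K)) * K := mul_le_mul_of_nonneg_right (min_le_right _ _) hKpos.le
    have h8 : (ε/(2*K)) * K = ε/2 := by field_simp
    linarith
  rw [Real.dist_eq, abs_sub_comm]
  calc |S - Si i| ≤ ε/2 := hdist.trans hbd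
    _ < ε := by linarith
end
end
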